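/- For every integer n ≥ 0, every integer r ≥ 1 and every real number x, E_{n,λ}^{(r)}(x+2) + Σ_{l=0}^{r−1} 2^l·E_{n,λ}^{(r−l)}(x−l) = 2^r·(x−r+2)_{n,λ}. -/

import Mathlib

open Finset PowerSeries

/-- degenerate falling factorial `(x)_{n,λ}`; `dff 1 x n` is the ordinary falling factorial. -/
noncomputable def dff (lam x : ℝ) (n : ℕ) : ℝ := ∏ i ∈ Finset.range n, (x - (i : ℝ) * lam)

/-- `(1)_{n,1/λ} = ∏_{i<n} (1 - i/λ)`. -/
noncomputable def oneFall (lam : ℝ) (n : ℕ) : ℝ := ∏ i ∈ Finset.range n, (1 - (i : ℝ) / lam)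

/-- degenerate exponential `e_λ^x(t)` as a formal power series. -/
noncomputable def degExp (lam x : ℝ) : PowerSeries ℝ :=
  PowerSeries.mk fun n => dff lam x n / n.factorial

/-- `(1+t)^y = Σ_{n≥0} (y)_n t^n/n!`. -/
noncomputable def onePlus (y : ℝ) : PowerSeries ℝ :=
  PowerSeries.mk fun n => dff 1 y n / n.factorial

/-- `(1-t)^y = Σ_{n≥0} (y)_n (-1)^n t^n/n!`. -/
noncomputable def oneMinus (y : ℝ) : PowerSeries ℝ :=
  PowerSeries.mk fun n => dff 1 y n * (-1) ^ n / n.factorial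

/-- `log_λ(1+t) = Σ_{n≥1} λ^{n-1} (1)_{n,1/λ} t^n/n!`. -/
noncomputable def degLog (lam : ℝ) : PowerSeries ℝ :=
  PowerSeries.mk fun n => if n = 0 then 0 else lam ^ (n - 1) * oneFall lam n / n.factorial

/-- `log_λ(1-t) = Σ_{n≥1} λ^{n-1} (1)_{n,1/λ} (-1)^n t^n/n!`. -/
noncomputable def degLogNeg (lam : ℝ) : PowerSeries ℝ :=
  PowerSeries.mk fun n =>
    if n = 0 then 0 else lam ^ (n - 1) * oneFall lam n * (-1) ^ n / n.factorial

/-- composition `f(g(t))` of formal power series (the usual composition when the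
constant term of `g` is zero). -/
noncomputable def pcomp (f g : PowerSeries ℝ) : PowerSeries ℝ :=
  PowerSeries.mk fun n =>
    ∑ k ∈ Finset.range (n + 1), (PowerSeries.coeff k f) * (PowerSeries.coeff n (g ^ k))

lemma dff_succ (lam c : ℝ) (m : ℕ) : dff lam c (m+1) = dff lam c m * (c - m * lam) :=
  Finset.prod_range_succ _ _

lemma dff_add (lam a b : ℝ) (n : ℕ) :
    dff lam (a + b) n
      = ∑ k ∈ Finset.range (n+1), (n.choose k : ℝ) * dff lam a k * dff lam b (n - k) := by
  induction n with
  | zero => simp [dff]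
  | succ n ih =>
    rw [Finset.sum_range_succ']
    have pascal : ∀ k ∈ Finset.range (n+1),
        ((n+1).choose (k+1) : ℝ) * dff lam a (k+1) * dff lam b (n+1-(k+1))
        = (n.choose k : ℝ) * dff lam a k * dff lam b (n-k) * (a - k*lam)
          + (n.choose (k+1) : ℝ) * dff lam a (k+1) * dff lam b (n+1-(k+1)) := by
      intro k hk
      rw [Nat.choose_succ_succ, Nat.succ_sub_succ, dff_succ]
      push_cast
      ring
    rw [Finset.sum_congr rfl pascal, Finset.sum_add_distrib]
    have h2 : (∑ k ∈ Finset.range (n+1),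
        (n.choose (k+1) : ℝ) * dff lam a (k+1) * dff lam b (n+1-(k+1)))
        + ((n+1).choose 0 : ℝ) * dff lam a 0 * dff lam b (n+1-0)
        = ∑ k ∈ Finset.range (n+2), (n.choose k : ℝ) * dff lam a k * dff lam b (n+1-k) := by
      conv_rhs => rw [Finset.sum_range_succ']
      norm_num
    have h2b : (∑ k ∈ Finset.range (n+2), (n.choose k : ℝ) * dff lam a k * dff lam b (n+1-k))
        = ∑ k ∈ Finset.range (n+1), (n.choose k : ℝ) * dff lam a k * dff lam b (n+1-k) := by
      rw [Finset.sum_range_succ]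
      simp
    have h3 : ∀ k ∈ Finset.range (n+1),
        (n.choose k : ℝ) * dff lam a k * dff lam b (n+1-k)
        = (n.choose k : ℝ) * dff lam a k * dff lam b (n-k) * (b - (n-k:ℕ)*lam) := by
      intro k hk
      simp only [Finset.mem_range, Nat.lt_succ_iff] at hk
      have : n + 1 - k = (n - k) + 1 := by omega
      rw [this, dff_succ]
      ring
    rw [add_assoc, h2, h2b, Finset.sum_congr rfl h3, ← Finset.sum_add_distrib, dff_succ, ih,
      Finset.sum_mul]
    apply Finset.sum_congr rfl
    intro k hk
    simp only [Finset.mem_range, Nat.lt_succ_iff] at hk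
    have : ((n-k : ℕ) : ℝ) = (n:ℝ) - k := by
      push_cast [Nat.cast_sub hk]; ring
    rw [this]
    ring

lemma degExp_mul (lam a b : ℝ) : degExp lam a * degExp lam b = degExp lam (a + b) := by
  ext n
  rw [PowerSeries.coeff_mul]
  simp only [degExp, PowerSeries.coeff_mk]
  rw [Finset.Nat.sum_antidiagonal_eq_sum_range_succ_mk, dff_add, Finset.sum_div]
  apply Finset.sum_congr rfl
  intro k hk
  simp only [Finset.mem_range, Nat.lt_succ_iff] at hk
  rw [Nat.cast_choose ℝ hk]
  have h1 : (k.factorial : ℝ) ≠ 0 := Nat.cast_ne_zero.mpr k.factorial_ne_zero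
  have h2 : ((n-k).factorial : ℝ) ≠ 0 := Nat.cast_ne_zero.mpr (n-k).factorial_ne_zero
  have h3 : (n.factorial : ℝ) ≠ 0 := Nat.cast_ne_zero.mpr n.factorial_ne_zero
  field_simp

lemma degExpD_ne (lam : ℝ) : degExp lam 1 + degExp lam (-1) ≠ 0 := by
  intro h
  have := congrArg (PowerSeries.coeff (R := ℝ) 0) h
  simp [degExp, dff] at this

lemma degExp_key (lam x : ℝ) :
    degExp lam (x+2) + degExp lam x
      = degExp lam (x+1) * (degExp lam 1 + degExp lam (-1)) := by
  rw [mul_add, degExp_mul, degExp_mul, show x+1+1 = x+2 by ring, show x+1+(-1) = x by ring]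

section
variable (lam : ℝ) (E : ℕ → ℝ → ℕ → ℝ)
  (hE : ∀ r : ℕ, 1 ≤ r → ∀ x : ℝ, (degExp lam 1 + degExp lam (-1)) ^ r *
      PowerSeries.mk (fun n => E r x n / n.factorial) = 2 ^ r * degExp lam x)

include hE

lemma Ebase (x : ℝ) (n : ℕ) : E 1 (x+2) n + E 1 x n = 2 * dff lam (x+1) n := by
  set D := degExp lam 1 + degExp lam (-1) with hDdef
  have hser : D * (PowerSeries.mk (fun n => E 1 (x+2) n / n.factorial)
      + PowerSeries.mk (fun n => E 1 x n / n.factorial)) = D * (2 * degExp lam (x+1)) := by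
    calc D * (PowerSeries.mk (fun n => E 1 (x+2) n / n.factorial)
        + PowerSeries.mk (fun n => E 1 x n / n.factorial))
        = D ^ 1 * PowerSeries.mk (fun n => E 1 (x+2) n / n.factorial)
          + D ^ 1 * PowerSeries.mk (fun n => E 1 x n / n.factorial) := by ring
      _ = 2 ^ 1 * degExp lam (x+2) + 2 ^ 1 * degExp lam x := by
          rw [hE 1 le_rfl (x+2), hE 1 le_rfl x]
      _ = 2 * (degExp lam (x+2) + degExp lam x) := by ring
      _ = 2 * (degExp lam (x+1) * D) := by rw [degExp_key]
      _ = D * (2 * degExp lam (x+1)) := by ring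
  have hcancel := mul_left_cancel₀ (degExpD_ne lam) hser
  have hc := congrArg (PowerSeries.coeff (R := ℝ) n) hcancel
  rw [two_mul, map_add, map_add] at hc
  simp only [PowerSeries.coeff_mk, degExp] at hc
  have h3 : (n.factorial : ℝ) ≠ 0 := Nat.cast_ne_zero.mpr n.factorial_ne_zero
  field_simp at hc
  linarith

lemma Estep (r : ℕ) (hr : 1 ≤ r) (x : ℝ) (n : ℕ) :
    E (r+1) (x+2) n + E (r+1) x n = 2 * E r (x+1) n := by
  set D := degExp lam 1 + degExp lam (-1) with hDdef
  have hser : D ^ (r+1) * (PowerSeries.mk (fun n => E (r+1) (x+2) n / n.factorial)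
      + PowerSeries.mk (fun n => E (r+1) x n / n.factorial))
      = D ^ (r+1) * (2 * PowerSeries.mk (fun n => E r (x+1) n / n.factorial)) := by
    calc D ^ (r+1) * (PowerSeries.mk (fun n => E (r+1) (x+2) n / n.factorial)
        + PowerSeries.mk (fun n => E (r+1) x n / n.factorial))
        = D ^ (r+1) * PowerSeries.mk (fun n => E (r+1) (x+2) n / n.factorial)
          + D ^ (r+1) * PowerSeries.mk (fun n => E (r+1) x n / n.factorial) := by ring
      _ = 2 ^ (r+1) * degExp lam (x+2) + 2 ^ (r+1) * degExp lam x := by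
          rw [hE (r+1) (Nat.le_add_left 1 r) (x+2), hE (r+1) (Nat.le_add_left 1 r) x]
      _ = 2 ^ (r+1) * (degExp lam (x+2) + degExp lam x) := by ring
      _ = 2 ^ (r+1) * (degExp lam (x+1) * D) := by rw [degExp_key]
      _ = D * (2 * (2 ^ r * degExp lam (x+1))) := by ring
      _ = D * (2 * (D ^ r * PowerSeries.mk (fun n => E r (x+1) n / n.factorial))) := by
          rw [hE r hr (x+1)]
      _ = D ^ (r+1) * (2 * PowerSeries.mk (fun n => E r (x+1) n / n.factorial)) := by ring
  have hcancel := mul_left_cancel₀ (pow_ne_zero (r+1) (degExpD_ne lam)) hser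
  have hc := congrArg (PowerSeries.coeff (R := ℝ) n) hcancel
  rw [two_mul, map_add, map_add] at hc
  simp only [PowerSeries.coeff_mk] at hc
  have h3 : (n.factorial : ℝ) ≠ 0 := Nat.cast_ne_zero.mpr n.factorial_ne_zero
  field_simp at hc
  linarith

end


/-- `E_{n,λ}^{(r)}(x+2) + Σ_{l=0}^{r-1} 2^l E_{n,λ}^{(r-l)}(x-l) = 2^r (x-r+2)_{n,λ}`. -/
theorem stmt_7 (lam : ℝ) (hlam : lam ≠ 0)
    (E : ℕ → ℝ → ℕ → ℝ)
    (hE : ∀ r : ℕ, 1 ≤ r → ∀ x : ℝ, (degExp lam 1 + degExp lam (-1)) ^ r *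
      PowerSeries.mk (fun n => E r x n / n.factorial) = 2 ^ r * degExp lam x)
    (n r : ℕ) (hr : 1 ≤ r) (x : ℝ) :
    E r (x + 2) n + ∑ l ∈ Finset.range r, 2 ^ l * E (r - l) (x - l) n =
      2 ^ r * dff lam (x - r + 2) n := by
  induction r, hr using Nat.le_induction generalizing x with
  | base =>
    rw [Finset.sum_range_one]
    norm_num
    rw [show x - (1:ℝ) + 2 = x + 1 by ring]
    linear_combination Ebase lam E hE x n
  | succ r hr ih =>
    rw [Finset.sum_range_succ']
    have hterm : ∀ l ∈ Finset.range r,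
        (2:ℝ) ^ (l+1) * E (r+1-(l+1)) (x - ((l+1:ℕ):ℝ)) n
        = 2 * ((2:ℝ) ^ l * E (r-l) ((x-1) - l) n) := by
      intro l hl
      have h1 : r + 1 - (l+1) = r - l := by omega
      have h2 : x - ((l+1:ℕ):ℝ) = (x-1) - l := by push_cast; ring
      rw [h1, h2]; ring
    rw [Finset.sum_congr rfl hterm, ← Finset.mul_sum]
    have hih := ih (x - 1)
    rw [show x - 1 + 2 = x + 1 by ring] at hih
    have hs := Estep lam E hE r hr x n
    rw [show x - ((r+1:ℕ):ℝ) + 2 = (x - 1) - r + 2 by push_cast; ring]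
    norm_num
    linear_combination hs + 2 * hih
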